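/- For any pair of matrices X, X̃ ∈ ℝ^{m₁×m₂}, ‖X + P⊥_X(X̃)‖_{σ,1} = ‖X‖_{σ,1} + ‖P⊥_X(X̃)‖_{σ,1}. -/

import Mathlib

open MeasureTheory ProbabilityTheory Matrix

/-- Singular values of a rectangular real matrix: square roots of the
eigenvalues of `Xᵀ * X`. -/
noncomputable def singVals {m₁ m₂ : ℕ} (X : Matrix (Fin m₁) (Fin m₂) ℝ) : Fin m₂ → ℝ :=
  fun i => Real.sqrt (((by simpa [Matrix.conjTranspose_eq_transpose_of_trivial] using Matrix.isHermitian_conjTranspose_mul_self X : (Xᵀ * X).IsHermitian)).eigenvalues i)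

/-- Nuclear (Schatten-1) norm `‖·‖_{σ,1}`. -/
noncomputable def nucNorm {m₁ m₂ : ℕ} (X : Matrix (Fin m₁) (Fin m₂) ℝ) : ℝ :=
  ∑ i, singVals X i

/-- Operator (Schatten-∞) norm `‖·‖_{σ,∞}`: the largest singular value. -/
noncomputable def opNorm {m₁ m₂ : ℕ} (X : Matrix (Fin m₁) (Fin m₂) ℝ) : ℝ :=
  ⨆ i, singVals X i

/-- Frobenius (Schatten-2) norm `‖·‖_{σ,2}`. -/
noncomputable def frobNorm {m₁ m₂ : ℕ} (X : Matrix (Fin m₁) (Fin m₂) ℝ) : ℝ :=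
  Real.sqrt (∑ k, ∑ l, (X k l) ^ 2)

/-- Entrywise sup norm `‖·‖_∞`. -/
noncomputable def linfNorm {m₁ m₂ : ℕ} (X : Matrix (Fin m₁) (Fin m₂) ℝ) : ℝ :=
  ⨆ p : Fin m₁ × Fin m₂, |X p.1 p.2|

/-- The matrix of the orthogonal projection onto a subspace `S` of `ℝ^k`. -/
noncomputable def projM {k : ℕ} (S : Submodule ℝ (EuclideanSpace ℝ (Fin k))) :
    Matrix (Fin k) (Fin k) ℝ :=
  LinearMap.toMatrix (EuclideanSpace.basisFun (Fin k) ℝ).toBasis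
    (EuclideanSpace.basisFun (Fin k) ℝ).toBasis
    (S.subtype ∘ₗ (Submodule.orthogonalProjectionOnto S).toLinearMap)

/-- The span `S₁(X)` of the left singular vectors of `X`, i.e. its column space
(`S₂(X)`, the span of the right singular vectors, is `colSpace Xᵀ`). -/
noncomputable def colSpace {m₁ m₂ : ℕ} (X : Matrix (Fin m₁) (Fin m₂) ℝ) :
    Submodule ℝ (EuclideanSpace ℝ (Fin m₁)) :=
  LinearMap.range (Matrix.toEuclideanLin X)

/-- The projection `P⊥_X(T) = P_{S₁(X)⊥} T P_{S₂(X)⊥}`. -/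
noncomputable def Pperp {m₁ m₂ : ℕ} (X T : Matrix (Fin m₁) (Fin m₂) ℝ) :
    Matrix (Fin m₁) (Fin m₂) ℝ :=
  projM (Submodule.orthogonal (colSpace X)) * T * projM (Submodule.orthogonal (colSpace Xᵀ))

/-- The projection `P_X(T) = T - P⊥_X(T)`. -/
noncomputable def Ppar {m₁ m₂ : ℕ} (X T : Matrix (Fin m₁) (Fin m₂) ℝ) :
    Matrix (Fin m₁) (Fin m₂) ℝ :=
  T - Pperp X T


section Aux

open scoped MatrixOrder

noncomputable def Matrix.PosSemidef.sqrt {n : ℕ} {A : Matrix (Fin n) (Fin n) ℝ}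
    (_hA : A.PosSemidef) : Matrix (Fin n) (Fin n) ℝ :=
  CFC.sqrt A

lemma Matrix.PosSemidef.posSemidef_sqrt {n : ℕ} {A : Matrix (Fin n) (Fin n) ℝ}
    (hA : A.PosSemidef) : hA.sqrt.PosSemidef :=
  Matrix.nonneg_iff_posSemidef.mp (CFC.sqrt_nonneg A)

lemma Matrix.PosSemidef.sqrt_mul_self {n : ℕ} {A : Matrix (Fin n) (Fin n) ℝ}
    (hA : A.PosSemidef) : hA.sqrt * hA.sqrt = A :=
  CFC.sqrt_mul_sqrt_self A (Matrix.nonneg_iff_posSemidef.mpr hA)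

lemma Matrix.PosSemidef.eq_sqrt_of_sq_eq {n : ℕ} {A B : Matrix (Fin n) (Fin n) ℝ}
    (hA : A.PosSemidef) (hB : B.PosSemidef) (h : A ^ 2 = B) : A = hB.sqrt :=
  ((CFC.sqrt_eq_iff B A (Matrix.nonneg_iff_posSemidef.mpr hB)
    (Matrix.nonneg_iff_posSemidef.mpr hA)).mpr (by rw [← sq]; exact h)).symm

lemma psd_sq_eq_zero {n : ℕ} {M : Matrix (Fin n) (Fin n) ℝ} (hM : M.PosSemidef)
    (h : M ^ 2 = 0) : M = 0 := by
  have h0 : (0 : Matrix (Fin n) (Fin n) ℝ).PosSemidef := Matrix.PosSemidef.zero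
  have h1 : M = h0.sqrt := hM.eq_sqrt_of_sq_eq h0 h
  have h2 : (0 : Matrix (Fin n) (Fin n) ℝ) = h0.sqrt :=
    h0.eq_sqrt_of_sq_eq h0 (by simp [pow_two])
  rw [h1, ← h2]

lemma herm_transpose {n : ℕ} {M : Matrix (Fin n) (Fin n) ℝ} (hM : M.IsHermitian) : Mᵀ = M := by
  rw [← Matrix.conjTranspose_eq_transpose_of_trivial]; exact hM.eq

lemma sqrt_mul_sqrt_eq_zero {n : ℕ} {A B : Matrix (Fin n) (Fin n) ℝ}
    (hA : A.PosSemidef) (hB : B.PosSemidef) (h : A * B = 0) :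
    hA.sqrt * hB.sqrt = 0 := by
  set sA := hA.sqrt with hsA
  set sB := hB.sqrt with hsB
  have hsBh : sBᴴ = sB := hB.posSemidef_sqrt.1.eq
  have hsAh : sAᴴ = sA := hA.posSemidef_sqrt.1.eq
  have hMpsd : (sB * A * sBᴴ).PosSemidef := hA.mul_mul_conjTranspose_same sB
  rw [hsBh] at hMpsd
  have hM2 : (sB * A * sB) ^ 2 = 0 := by
    rw [pow_two]
    calc (sB * A * sB) * (sB * A * sB) = sB * (A * ((sB * sB) * A)) * sB := by
          simp only [Matrix.mul_assoc]
    _ = sB * (A * B * A) * sB := by rw [hB.sqrt_mul_self, ← Matrix.mul_assoc A B, Matrix.mul_assoc]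
    _ = 0 := by rw [h]; simp
  have hM0 : sB * A * sB = 0 := psd_sq_eq_zero hMpsd hM2
  have key : (sA * sB)ᴴ * (sA * sB) = 0 := by
    rw [Matrix.conjTranspose_mul, hsAh, hsBh]
    calc sB * sA * (sA * sB) = sB * ((sA * sA) * sB) := by simp only [Matrix.mul_assoc]
    _ = sB * A * sB := by rw [hA.sqrt_mul_self, Matrix.mul_assoc]
    _ = 0 := hM0
  exact Matrix.conjTranspose_mul_self_eq_zero.mp key

lemma sqrt_add_of_mul_eq_zero {n : ℕ} {A B : Matrix (Fin n) (Fin n) ℝ}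
    (hA : A.PosSemidef) (hB : B.PosSemidef) (h : A * B = 0) :
    (hA.add hB).sqrt = hA.sqrt + hB.sqrt := by
  have hAB : hA.sqrt * hB.sqrt = 0 := sqrt_mul_sqrt_eq_zero hA hB h
  have hBA : hB.sqrt * hA.sqrt = 0 := by
    have h2 := congrArg Matrix.conjTranspose hAB
    rwa [Matrix.conjTranspose_mul, hA.posSemidef_sqrt.1.eq, hB.posSemidef_sqrt.1.eq,
      Matrix.conjTranspose_zero] at h2
  have hpsd : (hA.sqrt + hB.sqrt).PosSemidef := hA.posSemidef_sqrt.add hB.posSemidef_sqrt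
  have hsq : (hA.sqrt + hB.sqrt) ^ 2 = A + B := by
    rw [pow_two, Matrix.add_mul, Matrix.mul_add, Matrix.mul_add, hAB, hBA,
      hA.sqrt_mul_self, hB.sqrt_mul_self]
    simp
  exact (hpsd.eq_sqrt_of_sq_eq (hA.add hB) hsq).symm

lemma trace_sqrt {n : ℕ} {M : Matrix (Fin n) (Fin n) ℝ} (hM : M.PosSemidef) :
    hM.sqrt.trace = ∑ i, Real.sqrt (hM.1.eigenvalues i) := by
  rw [Matrix.PosSemidef.sqrt, CFC.sqrt_eq_cfc, cfc_nnreal_eq_real _ M, hM.1.cfc_eq,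
    Matrix.IsHermitian.cfc, Unitary.conjStarAlgAut_apply, Matrix.trace_mul_cycle]
  have h1 : (star hM.1.eigenvectorUnitary.1 : Matrix (Fin n) (Fin n) ℝ) * hM.1.eigenvectorUnitary.1 = 1 :=
    Unitary.coe_star_mul_self _
  rw [h1, Matrix.one_mul, Matrix.trace_diagonal]
  simp [max_eq_left (hM.eigenvalues_nonneg _)]

lemma toEuclideanLin_projM {k : ℕ} (S : Submodule ℝ (EuclideanSpace ℝ (Fin k))) :
    Matrix.toEuclideanLin (projM S) = S.subtype ∘ₗ (Submodule.orthogonalProjectionOnto S).toLinearMap := by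
  rw [Matrix.toEuclideanLin_eq_toLin_orthonormal, projM, Matrix.toLin_toMatrix]

lemma projM_hermitian {k : ℕ} (S : Submodule ℝ (EuclideanSpace ℝ (Fin k))) :
    (projM S).IsHermitian := by
  rw [Matrix.isHermitian_iff_isSymmetric, toEuclideanLin_projM]
  exact fun x y => Submodule.starProjection_isSymmetric S x y

lemma projM_orth_mul {k m : ℕ} (S : Submodule ℝ (EuclideanSpace ℝ (Fin k)))
    (A : Matrix (Fin k) (Fin m) ℝ)
    (hr : LinearMap.range (Matrix.toEuclideanLin A) ≤ S) :
    projM Sᗮ * A = 0 := by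
  apply Matrix.toEuclideanLin.injective
  have hmul : Matrix.toEuclideanLin (projM Sᗮ * A) =
      (Matrix.toEuclideanLin (projM Sᗮ)) ∘ₗ (Matrix.toEuclideanLin A) := by
    simp only [Matrix.toEuclideanLin_eq_toLin_orthonormal]
    rw [Matrix.toLin_mul _ ((EuclideanSpace.basisFun (Fin k) ℝ).toBasis) _]
  rw [hmul, toEuclideanLin_projM]
  ext x i
  have hx : Matrix.toEuclideanLin A x ∈ Sᗮᗮ :=
    S.le_orthogonal_orthogonal (hr ⟨x, rfl⟩)
  simp [Submodule.orthogonalProjectionOnto_apply_of_mem_orthogonal hx]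

lemma sqrt_congr {n : ℕ} {M N : Matrix (Fin n) (Fin n) ℝ} (h : M = N)
    (hM : M.PosSemidef) (hN : N.PosSemidef) : hM.sqrt = hN.sqrt := by
  subst h; rfl

lemma nucNorm_eq_trace_sqrt {m₁ m₂ : ℕ} (X : Matrix (Fin m₁) (Fin m₂) ℝ)
    (hX : (Xᵀ * X).PosSemidef) : nucNorm X = hX.sqrt.trace := by
  rw [trace_sqrt hX]; rfl

lemma psd_tmul {m₁ m₂ : ℕ} (X : Matrix (Fin m₁) (Fin m₂) ℝ) : (Xᵀ * X).PosSemidef := by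
  rw [← Matrix.conjTranspose_eq_transpose_of_trivial]
  exact Matrix.posSemidef_conjTranspose_mul_self X

end Aux

/-- Lemma 1(i): `‖X + P⊥_X(X̃)‖_{σ,1} = ‖X‖_{σ,1} + ‖P⊥_X(X̃)‖_{σ,1}`. -/
theorem nucNorm_add_Pperp (m₁ m₂ : ℕ) (X Xt : Matrix (Fin m₁) (Fin m₂) ℝ) :
    nucNorm (X + Pperp X Xt) = nucNorm X + nucNorm (Pperp X Xt) := by
  classical
  set P := projM (Submodule.orthogonal (colSpace X)) with hPdef
  set Q := projM (Submodule.orthogonal (colSpace Xᵀ)) with hQdef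
  set Y := Pperp X Xt with hYdef
  have hYeq : Y = P * Xt * Q := rfl
  have hPt : Pᵀ = P := herm_transpose (projM_hermitian _)
  have hQt : Qᵀ = Q := herm_transpose (projM_hermitian _)
  have hPX : P * X = 0 := projM_orth_mul (colSpace X) X le_rfl
  have hQXt : Q * Xᵀ = 0 := projM_orth_mul (colSpace Xᵀ) Xᵀ le_rfl
  have hXtP : Xᵀ * P = 0 := by
    have := congrArg Matrix.transpose hPX
    rwa [Matrix.transpose_mul, hPt, Matrix.transpose_zero] at this
  have hXQ : X * Q = 0 := by
    have := congrArg Matrix.transpose hQXt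
    rwa [Matrix.transpose_mul, hQt, Matrix.transpose_transpose, Matrix.transpose_zero] at this
  have hYt : Yᵀ = Q * Xtᵀ * P := by
    rw [hYeq, Matrix.transpose_mul, Matrix.transpose_mul, hPt, hQt, Matrix.mul_assoc]
  have hXtY : Xᵀ * Y = 0 := by
    rw [hYeq, ← Matrix.mul_assoc, ← Matrix.mul_assoc, hXtP, Matrix.zero_mul, Matrix.zero_mul]
  have hYtX : Yᵀ * X = 0 := by
    rw [hYt, Matrix.mul_assoc, hPX, Matrix.mul_zero]
  have hXYt : X * Yᵀ = 0 := by
    rw [hYt, ← Matrix.mul_assoc, ← Matrix.mul_assoc, hXQ, Matrix.zero_mul, Matrix.zero_mul]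
  have hA : (Xᵀ * X).PosSemidef := psd_tmul X
  have hB : (Yᵀ * Y).PosSemidef := psd_tmul Y
  have hcross : (Xᵀ * X) * (Yᵀ * Y) = 0 := by
    calc (Xᵀ * X) * (Yᵀ * Y) = Xᵀ * (X * Yᵀ) * Y := by simp only [Matrix.mul_assoc]
    _ = 0 := by rw [hXYt, Matrix.mul_zero, Matrix.zero_mul]
  have hsum : (X + Y)ᵀ * (X + Y) = Xᵀ * X + Yᵀ * Y := by
    rw [Matrix.transpose_add, Matrix.add_mul, Matrix.mul_add, Matrix.mul_add, hXtY, hYtX]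
    abel
  have hS : ((X + Y)ᵀ * (X + Y)).PosSemidef := psd_tmul (X + Y)
  rw [nucNorm_eq_trace_sqrt (X + Y) hS, nucNorm_eq_trace_sqrt X hA, nucNorm_eq_trace_sqrt Y hB,
    sqrt_congr hsum hS (hA.add hB), sqrt_add_of_mul_eq_zero hA hB hcross, Matrix.trace_add]
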